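/- Let θ < 0, ρ < 0, and let U : [0,∞) → ℝ³ solve the linear ODE U'(t) = C U(t) + I with U(0) = 0, where C = [[2(θ+ρ), 0, -2θρ],[0, 0, 2],[1, -θρ, θ+ρ]] and I = (1,0,0). Then U(t) converges as t → ∞ to -C⁻¹ I, whose components are (-1/(2(θ+ρ)), -1/(2θρ(θ+ρ)), 0). -/

import Mathlib

open Matrix Filter
set_option maxHeartbeats 1000000

lemma helper_pow_exp (l : ℝ) (hl : l < 0) (n : ℕ) :
    Tendsto (fun t : ℝ => t ^ n * Real.exp (l * t)) atTop (nhds 0) := by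
  have h1 : Tendsto (fun t : ℝ => (-l) * t) atTop atTop :=
    Filter.tendsto_id.const_mul_atTop (by linarith)
  have h2 := (Real.tendsto_pow_mul_exp_neg_atTop_nhds_zero n).comp h1
  have h3 := h2.const_mul ((-l) ^ n)⁻¹
  rw [mul_zero] at h3
  refine h3.congr fun t => ?_
  simp only [Function.comp]
  have he : Real.exp (-(-l * t)) = Real.exp (l * t) := by ring_nf
  rw [mul_pow, he, ← mul_assoc, ← mul_assoc,
    inv_mul_cancel₀ (pow_ne_zero n (by linarith : (-l) ≠ 0)), one_mul]

lemma helper_exp (l : ℝ) (hl : l < 0) :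
    Tendsto (fun t : ℝ => Real.exp (l * t)) atTop (nhds 0) := by
  simpa using helper_pow_exp l hl 0

lemma helper_ode_zero (h : ℝ → ℝ) (l : ℝ)
    (hd : ∀ t, 0 ≤ t → HasDerivAt h (l * h t) t) (h0 : h 0 = 0) :
    ∀ t, 0 ≤ t → h t = 0 := by
  intro t ht
  set k : ℝ → ℝ := fun t => h t * Real.exp (-l * t) with hk
  have hkd : ∀ x, 0 ≤ x → HasDerivAt k 0 x := by
    intro x hx
    have := (hd x hx).mul (((hasDerivAt_id x).const_mul (-l)).exp)
    refine this.congr_deriv ?_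
    simp only [id]
    ring
  have hkc : ContinuousOn k (Set.Icc 0 t) := fun x hx =>
    ((hkd x hx.1).continuousAt).continuousWithinAt
  have := constant_of_has_deriv_right_zero hkc
    (fun x hx => ((hkd x hx.1).hasDerivWithinAt)) t (Set.mem_Icc.2 ⟨ht, le_refl t⟩)
  have hk0 : k 0 = 0 := by simp [hk, h0]
  have hkt : h t * Real.exp (-l * t) = 0 := this.trans hk0
  exact (mul_eq_zero.1 hkt).resolve_right (Real.exp_ne_zero _)

lemma helper_ode_eq (x g : ℝ → ℝ) (l : ℝ) (f : ℝ → ℝ)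
    (hx : ∀ t, 0 ≤ t → HasDerivAt x (l * x t + f t) t)
    (hg : ∀ t, 0 ≤ t → HasDerivAt g (l * g t + f t) t)
    (h0 : x 0 = g 0) : ∀ t, 0 ≤ t → x t = g t := by
  have := helper_ode_zero (fun t => x t - g t) l (fun t ht => by
    have := (hx t ht).sub (hg t ht)
    refine this.congr_deriv ?_
    ring) (by simp [h0])
  intro t ht
  have h := this t ht
  simpa [sub_eq_zero] using h

lemma g1_deriv (l : ℝ) (hl : l ≠ 0) (t : ℝ) :
    HasDerivAt (fun t => (Real.exp (l * t) - 1) / l)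
      (l * ((Real.exp (l * t) - 1) / l) + 1) t := by
  have h := (((hasDerivAt_id t).const_mul l).exp.sub_const 1).div_const l
  refine h.congr_deriv ?_
  simp only [id]
  field_simp
  ring

lemma g1_tendsto (l : ℝ) (hl : l < 0) :
    Tendsto (fun t : ℝ => (Real.exp (l * t) - 1) / l) atTop (nhds (-1 / l)) := by
  have h := ((helper_exp l hl).sub (tendsto_const_nhds : Tendsto (fun _ : ℝ => (1:ℝ)) atTop (nhds 1))).div_const l
  simpa using h

theorem stmt2 (θ ρ : ℝ) (hθ : θ < 0) (hρ : ρ < 0)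
    (C : Matrix (Fin 3) (Fin 3) ℝ)
    (hC : C = !![2 * (θ + ρ), 0, -2 * θ * ρ; 0, 0, 2; 1, -(θ * ρ), θ + ρ])
    (I : Fin 3 → ℝ) (hI : I = ![1, 0, 0])
    (U : ℝ → Fin 3 → ℝ) (hU0 : U 0 = 0)
    (hode : ∀ t : ℝ, 0 ≤ t → HasDerivAt U (C.mulVec (U t) + I) t) :
    Tendsto U atTop (nhds (-(C⁻¹.mulVec I))) ∧
      -(C⁻¹.mulVec I) = ![-1 / (2 * (θ + ρ)), -1 / (2 * θ * ρ * (θ + ρ)), 0] := by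
  have hθ0 : θ ≠ 0 := ne_of_lt hθ
  have hρ0 : ρ ≠ 0 := ne_of_lt hρ
  have hsum : θ + ρ < 0 := by linarith
  have hsum0 : θ + ρ ≠ 0 := ne_of_lt hsum
  set w : Fin 3 → ℝ := ![-1 / (2 * (θ + ρ)), -1 / (2 * θ * ρ * (θ + ρ)), 0] with hw
  -- determinant
  have hdet : C.det ≠ 0 := by
    rw [hC]
    norm_num [Matrix.det_fin_three]
    exact ⟨⟨hsum0, by simp⟩, by simp [hθ0, hρ0]⟩
  have hCw : C.mulVec (-w) = I := by
    funext i
    rw [hC, hI]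
    fin_cases i <;>
      simp [Matrix.mulVec, dotProduct, Fin.sum_univ_three, hw] <;>
      field_simp <;> ring
  have heq : -(C⁻¹.mulVec I) = w := by
    rw [← hCw, Matrix.mulVec_mulVec, Matrix.nonsing_inv_mul _ (isUnit_iff_ne_zero.2 hdet),
      Matrix.one_mulVec, neg_neg]
  refine ⟨?_, heq⟩
  rw [heq, tendsto_pi_nhds]
  -- component derivatives
  have hcomp : ∀ t, 0 ≤ t → ∀ i, HasDerivAt (fun t => U t i) ((C.mulVec (U t) + I) i) t :=
    fun t ht => hasDerivAt_pi.1 (hode t ht)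
  have hval : ∀ v : Fin 3 → ℝ,
      (C.mulVec v + I : Fin 3 → ℝ) 0 = 2*(θ+ρ) * v 0 - 2*θ*ρ * v 2 + 1 ∧
      (C.mulVec v + I : Fin 3 → ℝ) 1 = 2 * v 2 ∧
      (C.mulVec v + I : Fin 3 → ℝ) 2 = v 0 - θ*ρ * v 1 + (θ+ρ) * v 2 := by
    intro v
    rw [hC, hI]
    refine ⟨?_, ?_, ?_⟩ <;>
      simp [Matrix.mulVec, dotProduct, Fin.sum_univ_three] <;> ring
  have hd0 : ∀ t, 0 ≤ t → HasDerivAt (fun t => U t 0)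
      (2*(θ+ρ) * U t 0 - 2*θ*ρ * U t 2 + 1) t := by
    intro t ht; have := hcomp t ht 0; rwa [(hval (U t)).1] at this
  have hd1 : ∀ t, 0 ≤ t → HasDerivAt (fun t => U t 1) (2 * U t 2) t := by
    intro t ht; have := hcomp t ht 1; rwa [(hval (U t)).2.1] at this
  have hd2 : ∀ t, 0 ≤ t → HasDerivAt (fun t => U t 2)
      (U t 0 - θ*ρ * U t 1 + (θ+ρ) * U t 2) t := by
    intro t ht; have := hcomp t ht 2; rwa [(hval (U t)).2.2] at this
  have hU00 : U 0 0 = 0 := by rw [hU0]; rfl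
  have hU01 : U 0 1 = 0 := by rw [hU0]; rfl
  have hU02 : U 0 2 = 0 := by rw [hU0]; rfl
  have hw0 : w 0 = -1 / (2 * (θ + ρ)) := rfl
  have hw1 : w 1 = -1 / (2 * θ * ρ * (θ + ρ)) := rfl
  have hw2 : w 2 = 0 := rfl
  -- eigen-functional p for eigenvalue 2θ : p = u1 + ρ² u2 - 2ρ u3
  have hpfun : ∀ t, 0 ≤ t → HasDerivAt (fun t => U t 0 + ρ^2 * U t 1 - 2*ρ * U t 2)
      (2*θ * (U t 0 + ρ^2 * U t 1 - 2*ρ * U t 2) + 1) t := by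
    intro t ht
    have h := ((hd0 t ht).add ((hd1 t ht).const_mul (ρ^2))).sub ((hd2 t ht).const_mul (2*ρ))
    refine h.congr_deriv ?_
    ring
  have hpe : ∀ t, 0 ≤ t → U t 0 + ρ^2 * U t 1 - 2*ρ * U t 2 = (Real.exp (2*θ*t) - 1) / (2*θ) :=
    helper_ode_eq _ _ (2*θ) (fun _ => 1) hpfun
      (fun t _ => g1_deriv (2*θ) (by positivity) t)
      (by simp [hU00, hU01, hU02])
  have hptend : Tendsto (fun t => U t 0 + ρ^2 * U t 1 - 2*ρ * U t 2) atTop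
      (nhds (-1 / (2*θ))) := by
    refine (g1_tendsto (2*θ) (by linarith)).congr' ?_
    filter_upwards [Filter.eventually_ge_atTop 0] with t ht
    exact (hpe t ht).symm
  -- eigen-functional q for eigenvalue 2ρ : q = u1 + θ² u2 - 2θ u3
  have hqfun : ∀ t, 0 ≤ t → HasDerivAt (fun t => U t 0 + θ^2 * U t 1 - 2*θ * U t 2)
      (2*ρ * (U t 0 + θ^2 * U t 1 - 2*θ * U t 2) + 1) t := by
    intro t ht
    have h := ((hd0 t ht).add ((hd1 t ht).const_mul (θ^2))).sub ((hd2 t ht).const_mul (2*θ))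
    refine h.congr_deriv ?_
    ring
  have hqe : ∀ t, 0 ≤ t → U t 0 + θ^2 * U t 1 - 2*θ * U t 2 = (Real.exp (2*ρ*t) - 1) / (2*ρ) :=
    helper_ode_eq _ _ (2*ρ) (fun _ => 1) hqfun
      (fun t _ => g1_deriv (2*ρ) (by positivity) t)
      (by simp [hU00, hU01, hU02])
  have hqtend : Tendsto (fun t => U t 0 + θ^2 * U t 1 - 2*θ * U t 2) atTop
      (nhds (-1 / (2*ρ))) := by
    refine (g1_tendsto (2*ρ) (by linarith)).congr' ?_
    filter_upwards [Filter.eventually_ge_atTop 0] with t ht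
    exact (hqe t ht).symm
  rcases eq_or_ne θ ρ with hte | hne
  · -- θ = ρ : Jordan chain
    subst hte
    -- s = u3 - θ u2 : s' = 2θ s + p
    have hsfun : ∀ t, 0 ≤ t → HasDerivAt (fun t => U t 2 - θ * U t 1)
        (2*θ * (U t 2 - θ * U t 1) + ((Real.exp (2*θ*t) - 1) / (2*θ))) t := by
      intro t ht
      have h := (hd2 t ht).sub ((hd1 t ht).const_mul θ)
      refine h.congr_deriv ?_
      rw [← hpe t ht]
      ring
    have hgs : ∀ t : ℝ, 0 ≤ t → HasDerivAt
        (fun t => (t/(2*θ) - 1/(4*θ^2)) * Real.exp (2*θ*t) + 1/(4*θ^2))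
        (2*θ * ((t/(2*θ) - 1/(4*θ^2)) * Real.exp (2*θ*t) + 1/(4*θ^2))
          + ((Real.exp (2*θ*t) - 1) / (2*θ))) t := by
      intro t _
      have h := ((((hasDerivAt_id t).div_const (2*θ)).sub_const (1/(4*θ^2))).mul
        (((hasDerivAt_id t).const_mul (2*θ)).exp)).add_const (1/(4*θ^2))
      refine h.congr_deriv ?_
      simp only [id]
      field_simp
      ring
    have hse : ∀ t, 0 ≤ t → U t 2 - θ * U t 1
        = (t/(2*θ) - 1/(4*θ^2)) * Real.exp (2*θ*t) + 1/(4*θ^2) := by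
      refine helper_ode_eq _ _ (2*θ) (fun t => (Real.exp (2*θ*t) - 1) / (2*θ)) hsfun hgs ?_
      simp [hU01, hU02]
    -- u2' = 2θ u2 + 2 s
    have hu2fun : ∀ t, 0 ≤ t → HasDerivAt (fun t => U t 1)
        (2*θ * U t 1 + 2 * ((t/(2*θ) - 1/(4*θ^2)) * Real.exp (2*θ*t) + 1/(4*θ^2))) t := by
      intro t ht
      have h := hd1 t ht
      convert h using 1
      rw [← hse t ht]
      ring
    have hgu2 : ∀ t : ℝ, 0 ≤ t → HasDerivAt
        (fun t => (t^2/(2*θ) - t/(2*θ^2) + 1/(4*θ^3)) * Real.exp (2*θ*t) - 1/(4*θ^3))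
        (2*θ * ((t^2/(2*θ) - t/(2*θ^2) + 1/(4*θ^3)) * Real.exp (2*θ*t) - 1/(4*θ^3))
          + 2 * ((t/(2*θ) - 1/(4*θ^2)) * Real.exp (2*θ*t) + 1/(4*θ^2))) t := by
      intro t _
      have h := (((((hasDerivAt_pow 2 t).div_const (2*θ)).sub
        ((hasDerivAt_id t).div_const (2*θ^2))).add_const (1/(4*θ^3))).mul
        (((hasDerivAt_id t).const_mul (2*θ)).exp)).sub_const (1/(4*θ^3))
      refine h.congr_deriv ?_
      simp only [id, Pi.sub_apply]
      field_simp
      ring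
    have hu2e : ∀ t, 0 ≤ t → U t 1
        = (t^2/(2*θ) - t/(2*θ^2) + 1/(4*θ^3)) * Real.exp (2*θ*t) - 1/(4*θ^3) := by
      refine helper_ode_eq _ _ (2*θ) _ hu2fun hgu2 ?_
      simp [hU01]
    have hgu2tend : Tendsto
        (fun t : ℝ => (t^2/(2*θ) - t/(2*θ^2) + 1/(4*θ^3)) * Real.exp (2*θ*t) - 1/(4*θ^3))
        atTop (nhds (-1/(4*θ^3))) := by
      have h2 := (helper_pow_exp (2*θ) (by linarith) 2).div_const (2*θ)
      have h1 := (helper_pow_exp (2*θ) (by linarith) 1).div_const (2*θ^2)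
      have h0 := (helper_exp (2*θ) (by linarith)).div_const (4*θ^3)
      have := (((h2.sub h1).add h0).sub (tendsto_const_nhds (x := 1/(4*θ^3))))
      simp only [zero_div, zero_sub, zero_add, sub_zero] at this
      rw [show -(1/(4*θ^3)) = -1/(4*θ^3) by ring] at this
      refine this.congr fun t => ?_
      field_simp
    have hu2tend : Tendsto (fun t => U t 1) atTop (nhds (-1/(4*θ^3))) := by
      refine hgu2tend.congr' ?_
      filter_upwards [Filter.eventually_ge_atTop 0] with t ht
      exact (hu2e t ht).symm
    have hstend : Tendsto (fun t => U t 2 - θ * U t 1) atTop (nhds (1/(4*θ^2))) := by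
      have h1 := (helper_pow_exp (2*θ) (by linarith) 1).div_const (2*θ)
      have h0 := (helper_exp (2*θ) (by linarith)).div_const (4*θ^2)
      have := ((h1.sub h0).add (tendsto_const_nhds (x := 1/(4*θ^2))))
      simp only [zero_div, zero_sub, zero_add, sub_zero, neg_zero] at this
      have h2 : Tendsto
          (fun t : ℝ => (t/(2*θ) - 1/(4*θ^2)) * Real.exp (2*θ*t) + 1/(4*θ^2))
          atTop (nhds (1/(4*θ^2))) := by
        refine this.congr fun t => ?_
        field_simp
      refine h2.congr' ?_
      filter_upwards [Filter.eventually_ge_atTop 0] with t ht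
      exact (hse t ht).symm
    have T0 : Tendsto (fun t => U t 0) atTop (nhds (w 0)) := by
      have h := (hptend.sub (hu2tend.const_mul (θ^2))).add
        ((hstend.add (hu2tend.const_mul θ)).const_mul (2*θ))
      have hval : -1/(2*θ) - θ^2 * (-1/(4*θ^3)) + 2*θ * (1/(4*θ^2) + θ * (-1/(4*θ^3)))
          = w 0 := by
        rw [hw0]
        field_simp
        ring
      rw [← hval]
      refine h.congr fun t => ?_
      ring
    have T1 : Tendsto (fun t => U t 1) atTop (nhds (w 1)) := by
      rw [hw1]
      have hval : -1/(4*θ^3) = -1 / (2 * θ * θ * (θ + θ)) := by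
        field_simp
        ring
      rw [← hval]
      exact hu2tend
    have T2 : Tendsto (fun t => U t 2) atTop (nhds (w 2)) := by
      rw [hw2]
      have h := hstend.add (hu2tend.const_mul θ)
      have hval : (1/(4*θ^2) + θ * (-1/(4*θ^3))) = 0 := by
        field_simp
        ring
      rw [← hval]
      refine h.congr fun t => ?_
      ring
    intro i
    fin_cases i
    · exact T0
    · exact T1
    · exact T2
  · -- θ ≠ ρ : three distinct eigen-functionals
    have hsub : θ - ρ ≠ 0 := sub_ne_zero.2 hne
    -- r = u1 + θρ u2 - (θ+ρ) u3
    have hrfun : ∀ t, 0 ≤ t → HasDerivAt (fun t => U t 0 + θ*ρ * U t 1 - (θ+ρ) * U t 2)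
        ((θ+ρ) * (U t 0 + θ*ρ * U t 1 - (θ+ρ) * U t 2) + 1) t := by
      intro t ht
      have h := ((hd0 t ht).add ((hd1 t ht).const_mul (θ*ρ))).sub ((hd2 t ht).const_mul (θ+ρ))
      refine h.congr_deriv ?_
      ring
    have hre : ∀ t, 0 ≤ t → U t 0 + θ*ρ * U t 1 - (θ+ρ) * U t 2
        = (Real.exp ((θ+ρ)*t) - 1) / (θ+ρ) :=
      helper_ode_eq _ _ (θ+ρ) (fun _ => 1) hrfun
        (fun t _ => g1_deriv (θ+ρ) hsum0 t)
        (by simp [hU00, hU01, hU02])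
    have hrtend : Tendsto (fun t => U t 0 + θ*ρ * U t 1 - (θ+ρ) * U t 2) atTop
        (nhds (-1 / (θ+ρ))) := by
      refine (g1_tendsto (θ+ρ) hsum).congr' ?_
      filter_upwards [Filter.eventually_ge_atTop 0] with t ht
      exact (hre t ht).symm
    have T0 : Tendsto (fun t => U t 0) atTop (nhds (w 0)) := by
      have h := (((hptend.const_mul (θ^2)).add (hqtend.const_mul (ρ^2))).sub
        (hrtend.const_mul (2*θ*ρ))).div_const ((θ-ρ)^2)
      have hval : (θ^2 * (-1/(2*θ)) + ρ^2 * (-1/(2*ρ)) - 2*θ*ρ * (-1/(θ+ρ))) / (θ-ρ)^2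
          = w 0 := by
        rw [hw0]
        field_simp
        ring
      rw [← hval]
      refine h.congr fun t => ?_
      field_simp
      ring
    have T1 : Tendsto (fun t => U t 1) atTop (nhds (w 1)) := by
      have h := (((hptend.add hqtend).sub (hrtend.const_mul 2))).div_const ((θ-ρ)^2)
      have hval : ((-1/(2*θ)) + (-1/(2*ρ)) - 2 * (-1/(θ+ρ))) / (θ-ρ)^2 = w 1 := by
        rw [hw1]
        field_simp
        ring
      rw [← hval]
      refine h.congr fun t => ?_
      field_simp
      ring
    have T2 : Tendsto (fun t => U t 2) atTop (nhds (w 2)) := by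
      have h := (((hptend.const_mul θ).add (hqtend.const_mul ρ)).sub
        (hrtend.const_mul (θ+ρ))).div_const ((θ-ρ)^2)
      have hval : (θ * (-1/(2*θ)) + ρ * (-1/(2*ρ)) - (θ+ρ) * (-1/(θ+ρ))) / (θ-ρ)^2
          = w 2 := by
        rw [hw2]
        field_simp
        ring
      rw [← hval]
      refine h.congr fun t => ?_
      field_simp
      ring
    intro i
    fin_cases i
    · exact T0
    · exact T1
    · exact T2
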